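/- Let k be a field, let A be a commutative k-algebra, and let J ⊆ A be an ideal. Let I = ker(μ_A : A ⊗_k A → A) and regard J ⊗_k A as a submodule (in fact an ideal) of A ⊗_k A. Then I ∩ (J ⊗_k A) = (J ⊗_k A) · I as submodules of A ⊗_k A. -/

import Mathlib

open TensorProduct

variable (k : Type*) [Field k]
variable (A : Type*) [CommRing A] [Algebra k A]
variable (J : Ideal A)

/-- Let `k` be a field, `A` a commutative `k`-algebra and `J ⊆ A` an ideal.
Let `I = ker (μ_A : A ⊗_k A → A)` and regard `J ⊗_k A` as the ideal of `A ⊗_k A` generated by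
the tensors `j ⊗ a` with `j ∈ J`.  Then `I ∩ (J ⊗_k A) = (J ⊗_k A) · I` as submodules
(ideals) of `A ⊗_k A`. -/
theorem inf_mulKer_eq_mul
    (I : Ideal (A ⊗[k] A)) (hI : I = RingHom.ker (Algebra.TensorProduct.lmul' k (S := A)))
    (JA : Ideal (A ⊗[k] A))
    (hJA : JA = Ideal.span {x : A ⊗[k] A | ∃ j ∈ J, ∃ a : A, x = j ⊗ₜ[k] a}) :
    I ⊓ JA = JA * I := by
  set μ := Algebra.TensorProduct.lmul' k (S := A) with hμ
  have hgen : ∀ j ∈ J, ∀ a : A, (j ⊗ₜ[k] a : A ⊗[k] A) ∈ JA := by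
    intro j hj a
    rw [hJA]
    exact Ideal.subset_span ⟨j, hj, a, rfl⟩
  have key : ∀ y ∈ JA, μ y ∈ J ∧ y - (μ y) ⊗ₜ[k] (1 : A) ∈ JA * I := by
    intro y hy
    rw [hJA] at hy
    refine Submodule.span_induction ?_ ?_ ?_ ?_ hy
    · rintro x ⟨j, hj, a, rfl⟩
      constructor
      · simpa [hμ] using J.mul_mem_right a hj
      · have hx : (j ⊗ₜ[k] a : A ⊗[k] A) - (μ (j ⊗ₜ[k] a)) ⊗ₜ[k] (1 : A)
            = (j ⊗ₜ[k] (1 : A)) * ((1 : A) ⊗ₜ[k] a - a ⊗ₜ[k] (1 : A)) := by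
          simp [hμ, mul_sub, Algebra.TensorProduct.tmul_mul_tmul]
        rw [hx]
        refine Ideal.mul_mem_mul (hgen j hj 1) ?_
        rw [hI]
        simp [RingHom.mem_ker, hμ]
    · constructor
      · simp
      · simp
    · intro x y _ _ hx hy
      constructor
      · simpa using J.add_mem hx.1 hy.1
      · have : x + y - (μ (x + y)) ⊗ₜ[k] (1 : A)
            = (x - (μ x) ⊗ₜ[k] (1 : A)) + (y - (μ y) ⊗ₜ[k] (1 : A)) := by
          simp [map_add, TensorProduct.add_tmul]
          ring
        rw [this]
        exact Ideal.add_mem _ hx.2 hy.2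
    · intro r x _ hx
      constructor
      · have : μ (r • x) = μ r * μ x := by simp [smul_eq_mul, map_mul]
        rw [this]
        exact J.mul_mem_left _ hx.1
      · have heq : r • x - (μ (r • x)) ⊗ₜ[k] (1 : A)
            = r * (x - (μ x) ⊗ₜ[k] (1 : A))
              + (r - (μ r) ⊗ₜ[k] (1 : A)) * ((μ x) ⊗ₜ[k] (1 : A)) := by
          simp [smul_eq_mul, map_mul, mul_sub, sub_mul,
            Algebra.TensorProduct.tmul_mul_tmul]
        rw [heq]
        refine Ideal.add_mem _ (Ideal.mul_mem_left _ _ hx.2) ?_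
        rw [mul_comm JA I]
        refine Ideal.mul_mem_mul ?_ (hgen _ hx.1 1)
        rw [hI]
        simp [RingHom.mem_ker, hμ]
  apply le_antisymm
  · intro x hx
    obtain ⟨hx1, hx2⟩ := hx
    have h0 : μ x = 0 := by rw [hI] at hx1; exact hx1
    have := (key x hx2).2
    rw [h0] at this
    simpa using this
  · exact le_inf Ideal.mul_le_right Ideal.mul_le_left
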